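/- Let α be a real number with 0 < α < π. Then for every real η with 0 < η < 1, one has cos((2π−α)η) < cos(αη). -/
import Mathlib

open Real

theorem cos_exterior_lt_cos_interior
    (α : ℝ) (hα0 : 0 < α) (hαπ : α < Real.pi)
    (η : ℝ) (hη0 : 0 < η) (hη1 : η < 1) :
    Real.cos ((2 * Real.pi - α) * η) < Real.cos (α * η) := by
  have hπ := Real.pi_pos
  have hlt : α * η < (2 * Real.pi - α) * η := by nlinarith
  rcases le_or_gt ((2 * Real.pi - α) * η) Real.pi with h | h
  · exact Real.strictAntiOn_cos ⟨by positivity, by nlinarith⟩ ⟨by nlinarith, h⟩ hlt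
  · have heq : Real.cos ((2 * Real.pi - α) * η)
        = Real.cos (2 * Real.pi - (2 * Real.pi - α) * η) := by
      rw [Real.cos_sub]; simp [Real.cos_two_pi, Real.sin_two_pi]
    rw [heq]
    apply Real.strictAntiOn_cos ⟨by positivity, by nlinarith⟩ ⟨by nlinarith, by nlinarith⟩
    nlinarith
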